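/- For every finite tree T with at least 2 vertices, VR(T, 1) ≥ 1/2. -/

import Mathlib

open SimpleGraph

variable {V : Type*}

/-- Distance from a vertex to a finite set of vertices (`⊤` if the set is empty). -/
noncomputable def distToSet (G : SimpleGraph V) (S : Finset V) (v : V) : ℕ∞ :=
  S.inf fun a => (G.dist a v : ℕ∞)

/-- Player A's Voronoi score. -/
noncomputable def scoreA [Fintype V] (G : SimpleGraph V) (A B : Finset V) : ℝ :=
  ∑ v : V,
    if distToSet G A v < distToSet G B v then 1
    else if distToSet G A v = distToSet G B v then 1/2 else 0

/-- Player B's Voronoi score. -/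
noncomputable def scoreB [Fintype V] (G : SimpleGraph V) (A B : Finset V) : ℝ :=
  ∑ v : V,
    if distToSet G B v < distToSet G A v then 1
    else if distToSet G B v = distToSet G A v then 1/2 else 0

/-- Minimax value (A's score under optimal play) of the Voronoi game with `t`
remaining rounds, given the sets of vertices already claimed by A and B. -/
noncomputable def gameValue [Fintype V] [DecidableEq V] (G : SimpleGraph V) :
    ℕ → Finset V → Finset V → ℝ
  | 0, A, B => scoreA G A B
  | (t+1), A, B =>
      sSup {r : ℝ | ∃ a, a ∉ A ∧ a ∉ B ∧
        r = sInf {s : ℝ | ∃ b, b ∉ insert a A ∧ b ∉ B ∧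
          s = gameValue G t (insert a A) (insert b B)}}

/-- The Voronoi ratio of `G` for a `t`-round game. -/
noncomputable def VR [Fintype V] [DecidableEq V] (G : SimpleGraph V) (t : ℕ) : ℝ :=
  gameValue G t ∅ ∅ / (Fintype.card V)


lemma myIsPath_append {G : SimpleGraph V} {u v w : V} {p : G.Walk u v} {q : G.Walk v w}
    (hp : p.IsPath) (hq : q.IsPath) (hd : ∀ x, x ∈ p.support → x ∈ q.support → x = v) :
    (p.append q).IsPath := by
  rw [SimpleGraph.Walk.isPath_def, SimpleGraph.Walk.support_append]
  have hq' := hq.support_nodup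
  rw [q.support_eq_cons, List.nodup_cons] at hq'
  refine List.Nodup.append hp.support_nodup hq'.2 ?_
  intro x hx hx'
  have : x ∈ q.support := by rw [q.support_eq_cons]; exact List.mem_cons_of_mem _ hx'
  have := hd x hx this
  subst this
  exact hq'.1 hx'

lemma tree_path_length {T : SimpleGraph V} (hconn : T.Connected) (hacyc : T.IsAcyclic)
    {u v : V} {p : T.Walk u v} (hp : p.IsPath) : p.length = T.dist u v := by
  obtain ⟨q, hq, hql⟩ := hconn.exists_path_of_dist u v
  have : (⟨p, hp⟩ : T.Path u v) = ⟨q, hq⟩ := isAcyclic_iff_path_unique.mp hacyc _ _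
  rw [show p = q from congrArg Subtype.val this, hql]

lemma takeUntil_cons' {G : SimpleGraph V} [DecidableEq V] {u v w x : V} (h : G.Adj u v)
    (p : G.Walk v w) (hx : x ∈ (SimpleGraph.Walk.cons h p).support) (hne : u ≠ x)
    (hx' : x ∈ p.support) :
    (SimpleGraph.Walk.cons h p).takeUntil x hx = SimpleGraph.Walk.cons h (p.takeUntil x hx') := by
  simp [SimpleGraph.Walk.takeUntil, hne]

lemma key_neighbor' [DecidableEq V] {T : SimpleGraph V} (hconn : T.Connected)
    (hacyc : T.IsAcyclic) {a b : V} (hab : a ≠ b) :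
    ∃ c, T.Adj a c ∧ ∀ v, T.dist b v ≤ T.dist a v → T.dist c v + 1 = T.dist a v := by
  obtain ⟨q, hq, -⟩ := hconn.exists_path_of_dist a b
  cases q with
  | nil => exact absurd rfl hab
  | cons h q' =>
    rename_i c
    rw [SimpleGraph.Walk.cons_isPath_iff] at hq
    refine ⟨c, h, fun v hv => ?_⟩
    have hva : v ≠ a := by
      intro h'
      subst h'
      have h0 : 0 < T.dist b v := hconn.pos_dist_of_ne (Ne.symm hab)
      rw [SimpleGraph.dist_self, Nat.le_zero] at hv
      omega
    obtain ⟨p, hp, hpl⟩ := hconn.exists_path_of_dist a v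
    by_cases hc : c ∈ p.support
    · have h1 : (p.takeUntil c hc).length = T.dist a c :=
        tree_path_length hconn hacyc (hp.takeUntil hc)
      have h2 : (p.dropUntil c hc).length = T.dist c v :=
        tree_path_length hconn hacyc (hp.dropUntil hc)
      have h3 : (p.takeUntil c hc).length + (p.dropUntil c hc).length = p.length := by
        rw [← SimpleGraph.Walk.length_append, SimpleGraph.Walk.take_spec]
      rw [h1, h2, hpl] at h3
      rw [SimpleGraph.dist_eq_one_iff_adj.mpr h] at h3
      omega
    · exfalso
      have hdisj : ∀ x, x ∈ p.support → x ∈ (SimpleGraph.Walk.cons h q').support → x = a := by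
        intro x hx1 hx2
        by_contra hxa
        have hxq' : x ∈ q'.support := by
          rw [SimpleGraph.Walk.support_cons] at hx2
          rcases List.mem_cons.mp hx2 with h' | h'
          · exact absurd h' hxa
          · exact h'
        have hxc : x ≠ c := fun h' => hc (h' ▸ hx1)
        have hq2 : (SimpleGraph.Walk.cons h q').IsPath := by
          rw [SimpleGraph.Walk.cons_isPath_iff]; exact hq
        have hx2' : x ∈ (SimpleGraph.Walk.cons h q').support := by
          rw [SimpleGraph.Walk.support_cons]; exact List.mem_cons_of_mem _ hxq'
        have heq : p.takeUntil x hx1 = (SimpleGraph.Walk.cons h q').takeUntil x hx2' :=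
          congrArg Subtype.val (isAcyclic_iff_path_unique.mp hacyc
            ⟨p.takeUntil x hx1, hp.takeUntil hx1⟩
            ⟨(SimpleGraph.Walk.cons h q').takeUntil x hx2', hq2.takeUntil hx2'⟩)
        have : c ∈ (p.takeUntil x hx1).support := by
          rw [heq, takeUntil_cons' h q' hx2' (fun h' => hxa h'.symm) hxq']
          rw [SimpleGraph.Walk.support_cons]
          exact List.mem_cons_of_mem _ (SimpleGraph.Walk.start_mem_support _)
        exact hc (SimpleGraph.Walk.support_takeUntil_subset _ hx1 this)
      have hW : (p.reverse.append (SimpleGraph.Walk.cons h q')).IsPath := by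
        refine myIsPath_append hp.reverse (by rw [SimpleGraph.Walk.cons_isPath_iff]; exact hq) ?_
        intro x hx1 hx2
        rw [SimpleGraph.Walk.support_reverse, List.mem_reverse] at hx1
        exact hdisj x hx1 hx2
      have hWl := tree_path_length hconn hacyc hW
      rw [SimpleGraph.Walk.length_append, SimpleGraph.Walk.length_reverse, hpl,
        SimpleGraph.Walk.length_cons] at hWl
      have hq'l : q'.length = T.dist c b := tree_path_length hconn hacyc hq.1
      rw [hq'l] at hWl
      rw [show T.dist v b = T.dist b v from SimpleGraph.dist_comm] at hWl
      omega

lemma centroid {T : SimpleGraph V} [Fintype V] [DecidableEq V] [Nonempty V]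
    (hconn : T.Connected) (hacyc : T.IsAcyclic) :
    ∃ a : V, ∀ b, b ≠ a →
      2 * (Finset.univ.filter (fun v => T.dist b v ≤ T.dist a v)).card ≤ Fintype.card V := by
  obtain ⟨a, -, ha⟩ := Finset.exists_min_image Finset.univ (fun x => ∑ v, T.dist x v)
    Finset.univ_nonempty
  refine ⟨a, fun b hb => ?_⟩
  obtain ⟨c, hac, hkey⟩ := key_neighbor' hconn hacyc (Ne.symm hb)
  set S' := Finset.univ.filter (fun v => T.dist c v + 1 = T.dist a v) with hS'
  set S'' := Finset.univ.filter (fun v => ¬(T.dist c v + 1 = T.dist a v)) with hS''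
  have hsub : Finset.univ.filter (fun v => T.dist b v ≤ T.dist a v) ⊆ S' := by
    intro v hv
    simp only [hS', Finset.mem_filter, Finset.mem_univ, true_and] at *
    exact hkey v hv
  have hcard := Finset.card_le_card hsub
  suffices h : 2 * S'.card ≤ Fintype.card V by omega
  have hmin : ∑ v, T.dist a v ≤ ∑ v, T.dist c v := ha c (Finset.mem_univ c)
  have htri : ∀ v, T.dist c v ≤ T.dist a v + 1 := by
    intro v
    calc T.dist c v ≤ T.dist c a + T.dist a v := hconn.dist_triangle
    _ = T.dist a v + 1 := by
        rw [show T.dist c a = 1 from SimpleGraph.dist_eq_one_iff_adj.mpr hac.symm]; omega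
  have hZ : (0:ℤ) ≤ ∑ v, ((T.dist c v : ℤ) - T.dist a v) := by
    rw [Finset.sum_sub_distrib, sub_nonneg]
    exact_mod_cast hmin
  have hsplit := Finset.sum_filter_add_sum_filter_not Finset.univ
    (fun v => T.dist c v + 1 = T.dist a v) (fun v => ((T.dist c v : ℤ) - T.dist a v))
  have h1 : ∑ v ∈ S', ((T.dist c v : ℤ) - T.dist a v) = -(S'.card : ℤ) := by
    have hterm : ∀ v ∈ S', ((T.dist c v : ℤ) - T.dist a v) = -1 := by
      intro v hv
      simp only [hS', Finset.mem_filter, Finset.mem_univ, true_and] at hv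
      rw [← hv]
      push_cast
      ring
    rw [Finset.sum_congr rfl hterm, Finset.sum_const]
    simp
  have h2 : ∑ v ∈ S'', ((T.dist c v : ℤ) - T.dist a v) ≤ (S''.card : ℤ) := by
    calc ∑ v ∈ S'', ((T.dist c v : ℤ) - T.dist a v) ≤ ∑ v ∈ S'', (1:ℤ) := by
          refine Finset.sum_le_sum fun v _ => ?_
          have := htri v
          omega
    _ = (S''.card : ℤ) := by simp
  have hcards : S'.card + S''.card = Fintype.card V := by
    rw [hS', hS'']
    rw [Finset.card_filter_add_card_filter_not]
    exact Finset.card_univ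
  rw [← hS', ← hS''] at hsplit
  have hfin : (0:ℤ) ≤ -(S'.card:ℤ) + S''.card := by
    calc (0:ℤ) ≤ ∑ v, ((T.dist c v : ℤ) - T.dist a v) := hZ
    _ = ∑ v ∈ S', ((T.dist c v : ℤ) - T.dist a v)
        + ∑ v ∈ S'', ((T.dist c v : ℤ) - T.dist a v) := hsplit.symm
    _ ≤ -(S'.card:ℤ) + S''.card := by rw [h1]; exact add_le_add le_rfl h2
  omega

lemma distToSet_singleton (G : SimpleGraph V) (a v : V) :
    distToSet G {a} v = (G.dist a v : ℕ∞) := Finset.inf_singleton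

lemma scoreA_nonneg [Fintype V] (G : SimpleGraph V) (A B : Finset V) : 0 ≤ scoreA G A B :=
  Finset.sum_nonneg fun v _ => by split_ifs <;> norm_num

lemma scoreA_le_card [Fintype V] (G : SimpleGraph V) (A B : Finset V) :
    scoreA G A B ≤ Fintype.card V := by
  rw [scoreA]
  calc (∑ v : V, if distToSet G A v < distToSet G B v then (1:ℝ)
        else if distToSet G A v = distToSet G B v then 1/2 else 0)
      ≤ ∑ _v : V, (1:ℝ) := Finset.sum_le_sum fun v _ => by split_ifs <;> norm_num
    _ = Fintype.card V := by simp

lemma half_le_scoreA [Fintype V] [DecidableEq V] {T : SimpleGraph V} {a b : V}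
    (hb : 2 * (Finset.univ.filter (fun v => T.dist b v ≤ T.dist a v)).card ≤ Fintype.card V) :
    (Fintype.card V : ℝ)/2 ≤ scoreA T {a} {b} := by
  set F := Finset.univ.filter (fun v => T.dist a v < T.dist b v) with hF
  have h1 : (F.card : ℝ) ≤ scoreA T {a} {b} := by
    rw [scoreA]
    calc (F.card:ℝ) = ∑ _v ∈ F, (1:ℝ) := by simp
    _ = ∑ v ∈ F, (if distToSet T {a} v < distToSet T {b} v then (1:ℝ)
          else if distToSet T {a} v = distToSet T {b} v then 1/2 else 0) := by
        refine Finset.sum_congr rfl fun v hv => ?_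
        simp only [hF, Finset.mem_filter, Finset.mem_univ, true_and] at hv
        rw [if_pos]
        rw [distToSet_singleton, distToSet_singleton]
        exact_mod_cast hv
    _ ≤ ∑ v : V, (if distToSet T {a} v < distToSet T {b} v then (1:ℝ)
          else if distToSet T {a} v = distToSet T {b} v then 1/2 else 0) := by
        refine Finset.sum_le_sum_of_subset_of_nonneg (Finset.subset_univ F) fun v _ _ => ?_
        split_ifs <;> norm_num
  have h2 : Fintype.card V ≤ 2 * F.card := by
    have hsplit := Finset.card_filter_add_card_filter_not
      (s := Finset.univ) (p := fun v => T.dist b v ≤ T.dist a v)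
    rw [Finset.card_univ] at hsplit
    have heq : Finset.univ.filter (fun v => ¬(T.dist b v ≤ T.dist a v)) = F := by
      ext v
      simp only [hF, Finset.mem_filter, Finset.mem_univ, true_and, not_le]
    rw [heq] at hsplit
    omega
  have h3 : (Fintype.card V : ℝ)/2 ≤ F.card := by
    have : (Fintype.card V : ℝ) ≤ 2 * F.card := by exact_mod_cast h2
    linarith
  linarith

/-- For every finite tree `T` with at least 2 vertices, `VR(T, 1) ≥ 1/2`. -/
theorem vr_tree_one_round {V : Type*} [Fintype V] [DecidableEq V]
    (T : SimpleGraph V) (hconn : T.Connected) (hacyc : T.IsAcyclic)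
    (h2 : 2 ≤ Fintype.card V) :
    (1 / 2 : ℝ) ≤ VR T 1 := by
  have hne : Nonempty V := Fintype.card_pos_iff.mp (by omega)
  obtain ⟨a, ha⟩ := centroid hconn hacyc
  set I : V → Set ℝ := fun a' => {s | ∃ b, b ∉ insert a' (∅:Finset V) ∧ b ∉ (∅:Finset V) ∧
    s = gameValue T 0 (insert a' ∅) (insert b ∅)} with hI
  set O : Set ℝ := {r | ∃ a', a' ∉ (∅:Finset V) ∧ a' ∉ (∅:Finset V) ∧ r = sInf (I a')} with hO
  have hgv : gameValue T 1 ∅ ∅ = sSup O := rfl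
  have hI0 : ∀ a' b, b ∉ insert a' (∅:Finset V) →
      gameValue T 0 (insert a' ∅) (insert b ∅) = scoreA T {a'} {b} := fun _ _ _ => rfl
  have hInonempty : ∀ a', (I a').Nonempty := by
    intro a'
    obtain ⟨b, hb⟩ := Fintype.exists_ne_of_one_lt_card (by omega) a'
    exact ⟨_, b, by simp [hb], by simp, rfl⟩
  have hIbdd : ∀ a', BddBelow (I a') := by
    intro a'
    refine ⟨0, fun s hs => ?_⟩
    obtain ⟨b, hb1, -, rfl⟩ := hs
    rw [hI0 a' b hb1]
    exact scoreA_nonneg T {a'} {b}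
  have hObdd : BddAbove O := by
    refine ⟨Fintype.card V, fun r hr => ?_⟩
    obtain ⟨a', -, -, rfl⟩ := hr
    obtain ⟨s, hs⟩ := hInonempty a'
    have hle := csInf_le (hIbdd a') hs
    obtain ⟨b, hb1, -, rfl⟩ := hs
    rw [hI0 a' b hb1] at hle
    exact hle.trans (scoreA_le_card T {a'} {b})
  have hmem : sInf (I a) ∈ O := ⟨a, by simp, by simp, rfl⟩
  have hinf : (Fintype.card V : ℝ)/2 ≤ sInf (I a) := by
    refine le_csInf (hInonempty a) fun s hs => ?_
    obtain ⟨b, hb1, -, rfl⟩ := hs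
    rw [hI0 a b hb1]
    have hba : b ≠ a := by simpa using hb1
    exact half_le_scoreA (ha b hba)
  have hg : (Fintype.card V : ℝ)/2 ≤ gameValue T 1 ∅ ∅ := by
    rw [hgv]
    exact hinf.trans (le_csSup hObdd hmem)
  have hcard0 : (0:ℝ) < Fintype.card V := by
    have : 0 < Fintype.card V := by omega
    exact_mod_cast this
  rw [VR, le_div_iff₀ hcard0]
  linarith
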